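/- Every shifted leading minor of the integer Pascal matrix with entries p_{ij} = C(j-1, i-1) equals 1, i.e., for any r ≥ 1 and j ≥ 0, the determinant of the matrix with entries C(j+l-1, k-1) for 1 ≤ k,l ≤ r equals 1. -/

import Mathlib

open Matrix

private lemma pascal_step (r j : ℕ) :
    (fun k l : Fin r => (Nat.choose (j + 1 + l.val) k.val : ℤ)) =
      (Matrix.of fun k k' : Fin r => (if k = k' then (1:ℤ) else 0) +
        (if k.val = k'.val + 1 then (1:ℤ) else 0)) *
      (Matrix.of fun k l : Fin r => (Nat.choose (j + l.val) k.val : ℤ)) := by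
  funext k l
  simp only [Matrix.mul_apply, Matrix.of_apply, add_mul, Finset.sum_add_distrib, ite_mul,
    one_mul, zero_mul, Finset.sum_ite_eq, Finset.mem_univ, if_true]
  rcases k with ⟨kv, hk⟩
  cases kv with
  | zero =>
    simp [Nat.choose_zero_right]
  | succ m =>
    have hm : m < r := Nat.lt_of_succ_lt hk
    have : ∀ k' : Fin r, ((⟨m+1, hk⟩ : Fin r).val = k'.val + 1) = (k' = ⟨m, hm⟩) := by
      intro k'
      simp [Fin.ext_iff, eq_comm]
    simp only [this, Finset.sum_ite_eq', Finset.mem_univ, if_true]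
    have h : j + 1 + l.val = (j + l.val) + 1 := by ring
    rw [h, Nat.choose_succ_succ (j + l.val) m]
    push_cast
    ring

/-- Every shifted leading minor of the integer Pascal matrix with entries
`C(j-1, i-1)` equals 1: for any `r ≥ 1` and `j ≥ 0`, the determinant of the
matrix with entries `C(j+l-1, k-1)` for `1 ≤ k, l ≤ r` (here 0-indexed as
`C(j+l, k)` for `k, l : Fin r`) equals 1. -/
theorem pascal_shifted_minor_int (r j : ℕ) :
    (Matrix.det (fun k l : Fin r => (Nat.choose (j + l.val) k.val : ℤ))) = 1 := by
  induction j with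
  | zero =>
    show (Matrix.of fun k l : Fin r => (Nat.choose (0 + l.val) k.val : ℤ)).det = 1
    rw [Matrix.det_of_upperTriangular]
    · simp
    · intro i j hji
      simp only [zero_add, Matrix.of_apply]
      exact_mod_cast Nat.choose_eq_zero_of_lt hji
  | succ j ih =>
    have ih' : (Matrix.of fun k l : Fin r => (Nat.choose (j + l.val) k.val : ℤ)).det = 1 := ih
    rw [pascal_step r j, Matrix.det_mul, ih', mul_one]
    rw [Matrix.det_of_lowerTriangular]
    · simp [Nat.succ_ne_self]
    · intro i j' hij
      have h1 : ¬ (i = j') := by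
        intro h; subst h; exact lt_irrefl _ hij
      have hv : (i : ℕ) < (j' : ℕ) := hij
      have h2 : ¬ (i.val = j'.val + 1) := by omega
      simp [h1, h2]
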